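/- If a Banach space X is octahedral, then for every N ∈ ℕ the N-fold injective symmetric tensor product ⊗̂_{ε,s,N} X is octahedral. -/

import Mathlib

open Filter Topology

noncomputable section

/-- A Banach space is octahedral (OH). -/
def IsOctahedral (Z : Type*) [NormedAddCommGroup Z] : Prop :=
  ∀ (n : ℕ) (z : Fin n → Z), (∀ i, ‖z i‖ = 1) → ∀ ε : ℝ, 0 < ε →
    ∃ w : Z, ‖w‖ = 1 ∧ ∀ i, ‖z i + w‖ > 2 - ε

/-- Locally octahedral (LOH). -/
def IsLocallyOctahedral (Z : Type*) [NormedAddCommGroup Z] : Prop :=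
  ∀ z : Z, ‖z‖ = 1 → ∀ ε : ℝ, 0 < ε →
    ∃ w : Z, ‖w‖ = 1 ∧ ‖z + w‖ > 2 - ε ∧ ‖z - w‖ > 2 - ε

/-- Weakly octahedral (WOH). -/
def IsWeaklyOctahedral (X : Type*) [NormedAddCommGroup X] [NormedSpace ℝ X] : Prop :=
  ∀ (n : ℕ) (z : Fin n → X), (∀ i, ‖z i‖ = 1) → ∀ f : X →L[ℝ] ℝ, ‖f‖ ≤ 1 →
    ∀ ε : ℝ, 0 < ε → ∃ y : X, ‖y‖ = 1 ∧ ∀ i, ∀ t : ℝ, 0 < t →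
      ‖z i + t • y‖ ≥ (1 - ε) * (|f (z i)| + t) ∧
      ‖z i - t • y‖ ≥ (1 - ε) * (|f (z i)| + t)

/-- Almost square (ASQ), sequential formulation. -/
def IsASQ (Z : Type*) [NormedAddCommGroup Z] : Prop :=
  ∀ (n : ℕ) (z : Fin n → Z), (∀ i, ‖z i‖ = 1) →
    ∃ w : ℕ → Z, (∀ k, ‖w k‖ ≤ 1) ∧
      Tendsto (fun k => ‖w k‖) atTop (nhds 1) ∧
      ∀ i, Tendsto (fun k => ‖z i + w k‖) atTop (nhds 1) ∧
           Tendsto (fun k => ‖z i - w k‖) atTop (nhds 1)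

/-- Almost square (ASQ), finite-ε formulation. -/
def IsASQeps (Z : Type*) [NormedAddCommGroup Z] : Prop :=
  ∀ (n : ℕ) (z : Fin n → Z), (∀ i, ‖z i‖ = 1) → ∀ ε : ℝ, 0 < ε →
    ∃ w : Z, ‖w‖ = 1 ∧ ∀ i, ‖z i + w‖ ≤ 1 + ε ∧ ‖z i - w‖ ≤ 1 + ε

/-- Locally almost square (LASQ), sequential formulation. -/
def IsLASQ (Z : Type*) [NormedAddCommGroup Z] : Prop :=
  ∀ z : Z, ‖z‖ = 1 →
    ∃ w : ℕ → Z, (∀ k, ‖w k‖ ≤ 1) ∧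
      Tendsto (fun k => ‖w k‖) atTop (nhds 1) ∧
      Tendsto (fun k => ‖z + w k‖) atTop (nhds 1) ∧
      Tendsto (fun k => ‖z - w k‖) atTop (nhds 1)

/-- Locally almost square (LASQ), ε formulation. -/
def IsLASQeps (Z : Type*) [NormedAddCommGroup Z] : Prop :=
  ∀ z : Z, ‖z‖ = 1 → ∀ ε : ℝ, 0 < ε →
    ∃ w : Z, ‖w‖ = 1 ∧ ‖z + w‖ ≤ 1 + ε ∧ ‖z - w‖ ≤ 1 + ε

/-- Weakly almost square (WASQ). -/
def IsWASQ (Z : Type*) [NormedAddCommGroup Z] [NormedSpace ℝ Z] : Prop :=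
  ∀ z : Z, ‖z‖ = 1 →
    ∃ w : ℕ → Z, (∀ k, ‖w k‖ ≤ 1) ∧
      Tendsto (fun k => ‖w k‖) atTop (nhds 1) ∧
      Tendsto (fun k => ‖z + w k‖) atTop (nhds 1) ∧
      Tendsto (fun k => ‖z - w k‖) atTop (nhds 1) ∧
      ∀ f : Z →L[ℝ] ℝ, Tendsto (fun k => f (w k)) atTop (nhds 0)

/-- Local diameter two property: every slice of the unit ball has diameter two. -/
def HasLD2P (Z : Type*) [NormedAddCommGroup Z] [NormedSpace ℝ Z] : Prop :=
  ∀ f : Z →L[ℝ] ℝ, ‖f‖ = 1 → ∀ α : ℝ, 0 < α →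
    Metric.diam {x : Z | ‖x‖ ≤ 1 ∧ 1 - α < f x} = 2

/-- Diameter two property: every nonempty relatively weakly open subset of the unit
ball has diameter two. -/
def HasD2P (Z : Type*) [NormedAddCommGroup Z] [NormedSpace ℝ Z] : Prop :=
  ∀ U : Set Z, U.Nonempty → (∀ x ∈ U, ‖x‖ ≤ 1) →
    (∀ x ∈ U, ∃ (n : ℕ) (f : Fin n → Z →L[ℝ] ℝ) (δ : ℝ), 0 < δ ∧
      {y : Z | ‖y‖ ≤ 1 ∧ ∀ i, |f i y - f i x| < δ} ⊆ U) →
    Metric.diam U = 2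

/-- The Schur property. -/
def HasSchurProperty (Z : Type*) [SeminormedAddCommGroup Z] [NormedSpace ℝ Z] : Prop :=
  ∀ (u : ℕ → Z) (x : Z),
    (∀ f : Z →L[ℝ] ℝ, Tendsto (fun k => f (u k)) atTop (nhds (f x))) →
    Tendsto (fun k => ‖u k - x‖) atTop (nhds 0)

/-- The Dunford–Pettis property: every weakly compact operator is
weak-to-norm sequentially continuous. -/
def HasDPP (X : Type*) [NormedAddCommGroup X] [NormedSpace ℝ X] : Prop :=
  ∀ (Y : Type) (_ : NormedAddCommGroup Y) (_ : NormedSpace ℝ Y) (_ : CompleteSpace Y)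
    (T : X →L[ℝ] Y),
    (∃ K : Set (WeakSpace ℝ Y), IsCompact K ∧
      ∀ x : X, ‖x‖ ≤ 1 → toWeakSpace ℝ Y (T x) ∈ K) →
    ∀ (u : ℕ → X) (x : X),
      (∀ f : X →L[ℝ] ℝ, Tendsto (fun k => f (u k)) atTop (nhds (f x))) →
      Tendsto (fun k => ‖T (u k) - T x‖) atTop (nhds 0)

/-- `Z`, together with the bilinear-type map `t`, is (a realization of) the injective
tensor product `X ⊗̂_ε Y`: the span of elementary tensors is dense and the norm of any
linear combination of elementary tensors is given by the injective tensor norm. -/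
def IsInjTensorProduct (X Y Z : Type*) [NormedAddCommGroup X] [NormedSpace ℝ X]
    [NormedAddCommGroup Y] [NormedSpace ℝ Y] [NormedAddCommGroup Z] [NormedSpace ℝ Z]
    (t : X → Y → Z) : Prop :=
  (Submodule.span ℝ (Set.range fun p : X × Y => t p.1 p.2)).topologicalClosure = ⊤ ∧
  ∀ l : List (X × Y),
    ‖(l.map fun p => t p.1 p.2).sum‖ =
      sSup {s : ℝ | ∃ (f : X →L[ℝ] ℝ) (g : Y →L[ℝ] ℝ), ‖f‖ ≤ 1 ∧ ‖g‖ ≤ 1 ∧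
        s = |(l.map fun p => f p.1 * g p.2).sum|}

/-- `Z`, together with the map `t`, is (a realization of) the projective tensor product
`X ⊗̂_π Y`: the span of elementary tensors is dense and the norm of any combination of
elementary tensors is the infimum of `Σ ‖xᵢ‖‖yᵢ‖` over all representations (two formal
combinations represent the same tensor iff they agree against all pairs of functionals). -/
def IsProjTensorProduct (X Y Z : Type*) [NormedAddCommGroup X] [NormedSpace ℝ X]
    [NormedAddCommGroup Y] [NormedSpace ℝ Y] [NormedAddCommGroup Z] [NormedSpace ℝ Z]
    (t : X → Y → Z) : Prop :=
  (Submodule.span ℝ (Set.range fun p : X × Y => t p.1 p.2)).topologicalClosure = ⊤ ∧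
  ∀ l : List (X × Y),
    ‖(l.map fun p => t p.1 p.2).sum‖ =
      sInf {s : ℝ | ∃ l' : List (X × Y),
        (∀ (f : X →L[ℝ] ℝ) (g : Y →L[ℝ] ℝ),
          (l'.map fun p => f p.1 * g p.2).sum = (l.map fun p => f p.1 * g p.2).sum) ∧
        s = (l'.map fun p => ‖p.1‖ * ‖p.2‖).sum}

/-- `Z`, together with the diagonal map `δ : x ↦ x^N`, is (a realization of) the `N`-fold
injective symmetric tensor product `⊗̂_{ε,s,N} X`. -/
def IsInjSymTensorProduct (X : Type*) [NormedAddCommGroup X] [NormedSpace ℝ X] (N : ℕ)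
    (Z : Type*) [NormedAddCommGroup Z] [NormedSpace ℝ Z] (δ : X → Z) : Prop :=
  (Submodule.span ℝ (Set.range δ)).topologicalClosure = ⊤ ∧
  ∀ l : List (ℝ × X),
    ‖(l.map fun p => p.1 • δ p.2).sum‖ =
      sSup {s : ℝ | ∃ f : X →L[ℝ] ℝ, ‖f‖ ≤ 1 ∧
        s = |(l.map fun p => p.1 * (f p.2) ^ N).sum|}

/-- `Z`, together with the diagonal map `δ : x ↦ x^N`, is (a realization of) the `N`-fold
projective symmetric tensor product `⊗̂_{π,s,N} X`. -/
def IsProjSymTensorProduct (X : Type*) [NormedAddCommGroup X] [NormedSpace ℝ X] (N : ℕ)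
    (Z : Type*) [NormedAddCommGroup Z] [NormedSpace ℝ Z] (δ : X → Z) : Prop :=
  (Submodule.span ℝ (Set.range δ)).topologicalClosure = ⊤ ∧
  ∀ l : List (ℝ × X),
    ‖(l.map fun p => p.1 • δ p.2).sum‖ =
      sInf {s : ℝ | ∃ l' : List (ℝ × X),
        (∀ f : X →L[ℝ] ℝ,
          (l'.map fun p => p.1 * (f p.2) ^ N).sum = (l.map fun p => p.1 * (f p.2) ^ N).sum) ∧
        s = (l'.map fun p => |p.1| * ‖p.2‖ ^ N).sum}

/-- An operator `T : X* → Y` is weak*-to-weakly continuous. -/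
def WeakStarToWeakContinuous {X Y : Type*} [NormedAddCommGroup X] [NormedSpace ℝ X]
    [NormedAddCommGroup Y] [NormedSpace ℝ Y] (T : (X →L[ℝ] ℝ) →L[ℝ] Y) : Prop :=
  ∀ g : Y →L[ℝ] ℝ, Continuous fun f : WeakDual ℝ X => g (T f)

/-- The elementary tensor `x ⊗ y` regarded as the operator `x* ↦ x*(x) • y` in `L(X*, Y)`. -/
def elemTensor {X Y : Type*} [NormedAddCommGroup X] [NormedSpace ℝ X]
    [NormedAddCommGroup Y] [NormedSpace ℝ Y] (x : X) (y : Y) : (X →L[ℝ] ℝ) →L[ℝ] Y :=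
  (ContinuousLinearMap.apply ℝ ℝ x).smulRight y

/-- `n(Z, u) = 1`, i.e. `D(Z,u) = {f ∈ B_{Z*} : f(u) = 1}` is a norming set for `Z`. -/
def NormOneUnitary (Z : Type*) [NormedAddCommGroup Z] [NormedSpace ℝ Z] (u : Z) : Prop :=
  ‖u‖ = 1 ∧ ∀ z : Z, ‖z‖ ≤ sSup {r : ℝ | ∃ g : Z →L[ℝ] ℝ, ‖g‖ ≤ 1 ∧ g u = 1 ∧ r = |g z|}

/-- Asplund space: every closed separable subspace has separable dual. -/
def IsAsplund (Y : Type*) [NormedAddCommGroup Y] [NormedSpace ℝ Y] : Prop :=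
  ∀ S : Submodule ℝ Y, IsClosed (S : Set Y) → TopologicalSpace.SeparableSpace S →
    TopologicalSpace.SeparableSpace ((↥S) →L[ℝ] ℝ)

/-- The (metric) approximation-type property: finite-rank operators approximate the
identity uniformly on compact sets. -/
def HasAP (E : Type*) [NormedAddCommGroup E] [NormedSpace ℝ E] : Prop :=
  ∀ K : Set E, IsCompact K → ∀ ε : ℝ, 0 < ε →
    ∃ T : E →L[ℝ] E, FiniteDimensional ℝ (LinearMap.range (T : E →ₗ[ℝ] E)) ∧
      ∀ x ∈ K, ‖T x - x‖ ≤ ε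

end

noncomputable section AuxOH

open Submodule

variable {X : Type*} [NormedAddCommGroup X] [NormedSpace ℝ X]

lemma aux_list_abs_le (N : ℕ) (f : X →L[ℝ] ℝ) (hf : ‖f‖ ≤ 1) (l : List (ℝ × X)) :
    |(l.map fun p => p.1 * (f p.2) ^ N).sum| ≤ (l.map fun p : ℝ × X => |p.1| * ‖p.2‖ ^ N).sum := by
  induction l with
  | nil => simp
  | cons p l ih =>
    simp only [List.map_cons, List.sum_cons]
    refine (abs_add_le _ _).trans (add_le_add ?_ ih)
    rw [abs_mul, abs_pow]
    have h1 : |f p.2| ≤ ‖p.2‖ := by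
      calc |f p.2| = ‖f p.2‖ := rfl
        _ ≤ ‖f‖ * ‖p.2‖ := f.le_opNorm _
        _ ≤ 1 * ‖p.2‖ := by gcongr
        _ = ‖p.2‖ := one_mul _
    gcongr

lemma aux_bdd (N : ℕ) (l : List (ℝ × X)) :
    BddAbove {s : ℝ | ∃ f : X →L[ℝ] ℝ, ‖f‖ ≤ 1 ∧
      s = |(l.map fun p => p.1 * (f p.2) ^ N).sum|} := by
  refine ⟨(l.map fun p : ℝ × X => |p.1| * ‖p.2‖ ^ N).sum, ?_⟩
  rintro s ⟨f, hf, rfl⟩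
  exact aux_list_abs_le N f hf l

lemma aux_value_le_norm {Z : Type*} [NormedAddCommGroup Z] [NormedSpace ℝ Z] {N : ℕ}
    {δ : X → Z} (hδ : IsInjSymTensorProduct X N Z δ)
    (l : List (ℝ × X)) (f : X →L[ℝ] ℝ) (hf : ‖f‖ ≤ 1) :
    |(l.map fun p => p.1 * (f p.2) ^ N).sum| ≤ ‖(l.map fun p => p.1 • δ p.2).sum‖ := by
  rw [hδ.2 l]
  exact le_csSup (aux_bdd N l) ⟨f, hf, rfl⟩

lemma aux_norm_le {Z : Type*} [NormedAddCommGroup Z] [NormedSpace ℝ Z] {N : ℕ}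
    {δ : X → Z} (hδ : IsInjSymTensorProduct X N Z δ)
    (l : List (ℝ × X)) (C : ℝ) (hC0 : 0 ≤ C)
    (hC : ∀ f : X →L[ℝ] ℝ, ‖f‖ ≤ 1 → |(l.map fun p => p.1 * (f p.2) ^ N).sum| ≤ C) :
    ‖(l.map fun p => p.1 • δ p.2).sum‖ ≤ C := by
  rw [hδ.2 l]
  refine Real.sSup_le ?_ hC0
  rintro s ⟨f, hf, rfl⟩
  exact hC f hf

lemma aux_strongOH (hX : IsOctahedral X) {s : Set X} (hs : s.Finite)
    {ε : ℝ} (hε : 0 < ε) (hε2 : ε ≤ 1/2) :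
    ∃ a : X, ‖a‖ = 1 ∧ ∀ y ∈ Submodule.span ℝ s, ∀ l : ℝ,
      (1 - ε) * (‖y‖ + |l|) ≤ ‖y + l • a‖ := by
  classical
  set E := Submodule.span ℝ s with hE
  have hfd : FiniteDimensional ℝ E := FiniteDimensional.span_of_finite ℝ hs
  have hK : IsCompact (Subtype.val '' (Metric.sphere (0 : E) 1)) :=
    (isCompact_sphere _ _).image continuous_subtype_val
  obtain ⟨t, hts, htf, htcov⟩ := hK.finite_cover_balls (by positivity : (0:ℝ) < ε/2)
  obtain ⟨n, zf, hzr⟩ : ∃ (n : ℕ) (zf : Fin n → X), ∀ x, x ∈ t ↔ ∃ i, zf i = x := by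
    refine ⟨htf.toFinset.card, fun i => ((htf.toFinset.equivFin.symm i : X)), fun x => ?_⟩
    constructor
    · intro hx
      exact ⟨htf.toFinset.equivFin ⟨x, htf.mem_toFinset.2 hx⟩, by simp⟩
    · rintro ⟨i, rfl⟩
      exact htf.mem_toFinset.1 (htf.toFinset.equivFin.symm i).2
  have hzt : ∀ i, zf i ∈ t := fun i => (hzr (zf i)).2 ⟨i, rfl⟩
  have hz1 : ∀ i, ‖zf i‖ = 1 := by
    intro i
    obtain ⟨y, hy, hyx⟩ := hts (hzt i)
    rw [← hyx]
    have : ‖y‖ = 1 := by simpa [dist_eq_norm] using hy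
    simpa using this
  obtain ⟨a, ha1, hai⟩ := hX n zf hz1 (ε/2) (by positivity)
  have key : ∀ y ∈ E, ∀ l : ℝ, 0 ≤ l → (1 - ε) * (‖y‖ + l) ≤ ‖y + l • a‖ := by
    intro y hy l hl
    rcases eq_or_ne y 0 with rfl | hy0
    · have h2 : ‖(0 : X) + l • a‖ = l := by
        rw [zero_add, norm_smul, ha1, Real.norm_eq_abs, abs_of_nonneg hl, mul_one]
      rw [h2, norm_zero, zero_add]
      nlinarith
    · set yh : X := ‖y‖⁻¹ • y with hyh
      have hyn : (0:ℝ) < ‖y‖ := norm_pos_iff.2 hy0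
      have hyhE : yh ∈ E := E.smul_mem _ hy
      have hyh1 : ‖yh‖ = 1 := by
        rw [hyh, norm_smul, Real.norm_eq_abs, abs_of_pos (inv_pos.2 hyn), inv_mul_cancel₀ hyn.ne']
      have hyhK : yh ∈ Subtype.val '' (Metric.sphere (0 : E) 1) :=
        ⟨⟨yh, hyhE⟩, by simpa [Metric.mem_sphere, dist_eq_norm] using hyh1, rfl⟩
      obtain ⟨x₀, hx₀t, hx₀d⟩ := Set.mem_iUnion₂.1 (htcov hyhK)
      have hdist : ‖yh - x₀‖ < ε/2 := by
        have := Metric.mem_ball.1 hx₀d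
        rwa [dist_eq_norm] at this
      obtain ⟨i, rfl⟩ := (hzr x₀).1 hx₀t
      have hx0a : 2 - ε/2 < ‖zf i + a‖ := hai i
      have hne : zf i + a ≠ 0 := by
        intro h
        rw [h, norm_zero] at hx0a
        linarith
      obtain ⟨g, hg1, hgx⟩ := exists_dual_vector ℝ (zf i + a) (norm_ne_zero_iff.2 hne)
      have hgx' : g (zf i + a) = ‖zf i + a‖ := by exact_mod_cast hgx
      have hgb : ∀ x : X, |g x| ≤ ‖x‖ := by
        intro x
        calc |g x| = ‖g x‖ := rfl
          _ ≤ ‖g‖ * ‖x‖ := g.le_opNorm x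
          _ = ‖x‖ := by rw [hg1, one_mul]
      have hga : 1 - ε/2 < g a := by
        have h1 : |g (zf i)| ≤ 1 := by rw [← hz1 i]; exact hgb _
        have h2 : g (zf i) + g a = ‖zf i + a‖ := by rw [← hgx']; simp
        have := abs_le.1 h1
        linarith
      have hgz : 1 - ε/2 < g (zf i) := by
        have h1 : |g a| ≤ 1 := by rw [← ha1]; exact hgb _
        have h2 : g (zf i) + g a = ‖zf i + a‖ := by rw [← hgx']; simp
        have := abs_le.1 h1
        linarith
      have hgyh : 1 - ε < g yh := by
        have h1 : |g (yh - zf i)| ≤ ‖yh - zf i‖ := hgb _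
        have h2 : g yh = g (zf i) + g (yh - zf i) := by simp
        have := abs_le.1 h1
        linarith
      have hgy : ‖y‖ * (1 - ε) ≤ g y := by
        have hyeq : y = ‖y‖ • yh := by rw [hyh, smul_smul, mul_inv_cancel₀ hyn.ne', one_smul]
        have h5 : g y = ‖y‖ * g yh := by
          conv_lhs => rw [hyeq]
          rw [map_smul, smul_eq_mul]
        rw [h5]
        exact mul_le_mul_of_nonneg_left hgyh.le hyn.le
      have hfinal : (1 - ε) * (‖y‖ + l) ≤ g (y + l • a) := by
        have h3 : g (y + l • a) = g y + l * g a := by simp [smul_eq_mul]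
        have h4 : l * (1 - ε) ≤ l * g a := by nlinarith
        rw [h3]; nlinarith
      calc (1 - ε) * (‖y‖ + l) ≤ g (y + l • a) := hfinal
        _ ≤ |g (y + l • a)| := le_abs_self _
        _ ≤ ‖y + l • a‖ := hgb _
  refine ⟨a, ha1, ?_⟩
  intro y hy l
  rcases le_or_gt 0 l with hl | hl
  · rw [abs_of_nonneg hl]; exact key y hy l hl
  · have h := key (-y) (E.neg_mem hy) (-l) (by linarith)
    have h2 : -y + (-l) • a = -(y + l • a) := by
      rw [neg_smul, neg_add]
    rw [h2, norm_neg, norm_neg] at h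
    rw [abs_of_neg hl]
    exact h

lemma aux_strongOH2 (hX : IsOctahedral X) {s : Set X} (hs : s.Finite)
    {ε : ℝ} (hε : 0 < ε) (hε2 : ε ≤ 1/2) :
    ∃ a b : X, ‖a‖ = 1 ∧ ‖b‖ = 1 ∧ ∀ y ∈ Submodule.span ℝ s, ∀ l m : ℝ,
      (1 - ε) * (‖y‖ + |l| + |m|) ≤ ‖y + l • a + m • b‖ := by
  obtain ⟨a, ha1, hA⟩ := aux_strongOH hX hs (half_pos hε) (by linarith)
  obtain ⟨b, hb1, hB⟩ := aux_strongOH hX (hs.insert a) (half_pos hε) (by linarith)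
  refine ⟨a, b, ha1, hb1, fun y hy l m => ?_⟩
  have hya : y + l • a ∈ Submodule.span ℝ (insert a s) := by
    refine Submodule.add_mem _ (Submodule.span_mono (Set.subset_insert a s) hy) ?_
    exact Submodule.smul_mem _ _ (Submodule.subset_span (Set.mem_insert a s))
  have h1 := hB (y + l • a) hya m
  have h2 := hA y hy l
  have hε' : (0:ℝ) ≤ 1 - ε/2 := by linarith
  have step1 : (1 - ε) * (‖y‖ + |l| + |m|) ≤ (1 - ε/2) * ((1 - ε/2) * (‖y‖ + |l|) + |m|) := by
    nlinarith [abs_nonneg l, abs_nonneg m, norm_nonneg y, sq_nonneg ε]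
  have step2 : (1 - ε/2) * ((1 - ε/2) * (‖y‖ + |l|) + |m|) ≤ (1 - ε/2) * (‖y + l • a‖ + |m|) := by
    gcongr
  linarith

lemma aux_functional {E : Submodule ℝ X} {a b : X} {ε : ℝ}
    (hε0 : 0 ≤ ε) (hε1 : ε < 1) (ha0 : a ≠ 0) (hb0 : b ≠ 0)
    (P : ∀ y ∈ E, ∀ l m : ℝ, (1 - ε) * (‖y‖ + |l| + |m|) ≤ ‖y + l • a + m • b‖)
    (f : X →L[ℝ] ℝ) (hf : ‖f‖ ≤ 1) (s t : ℝ) (hs : |s| ≤ 1) (ht : |t| ≤ 1) :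
    ∃ h : X →L[ℝ] ℝ, ‖h‖ ≤ 1 ∧ (∀ y ∈ E, h y = (1 - ε) * f y) ∧
      h a = (1 - ε) * s ∧ h b = (1 - ε) * t := by
  have h1ε : (0:ℝ) < 1 - ε := by linarith
  have hzero : ∀ y ∈ E, ∀ c d : ℝ, y + c • a + d • b = 0 → y = 0 ∧ c = 0 ∧ d = 0 := by
    intro y hy c d h0
    have hP := P y hy c d
    rw [h0, norm_zero] at hP
    have hn := norm_nonneg y
    have hc := abs_nonneg c
    have hd := abs_nonneg d
    refine ⟨norm_eq_zero.1 (le_antisymm (by nlinarith) hn), ?_, ?_⟩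
    · exact abs_eq_zero.1 (le_antisymm (by nlinarith) hc)
    · exact abs_eq_zero.1 (le_antisymm (by nlinarith) hd)
  set pa := LinearPMap.mkSpanSingleton (K := ℝ) (L := ℝ) (σ := RingHom.id ℝ) a ((1-ε)*s) ha0 with hpa
  set pb := LinearPMap.mkSpanSingleton (K := ℝ) (L := ℝ) (σ := RingHom.id ℝ) b ((1-ε)*t) hb0 with hpb
  set pE : X →ₗ.[ℝ] ℝ := ((1-ε) • f.toLinearMap).toPMap E with hpE
  have compat_ab : ∀ (x : pa.domain) (y : pb.domain), (x : X) = y → pa x = pb y := by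
    rintro ⟨x, hx⟩ ⟨y, hy⟩ (hxy : x = y)
    obtain ⟨c, hc⟩ := Submodule.mem_span_singleton.1 hx
    obtain ⟨d, hd⟩ := Submodule.mem_span_singleton.1 hy
    have h0 : (0:X) + c • a + (-d) • b = 0 := by
      rw [zero_add, neg_smul, hc, hd, hxy, add_neg_cancel]
    obtain ⟨-, hc0, hd0⟩ := hzero 0 E.zero_mem c (-d) h0
    have hx0 : x = 0 := by rw [← hc, hc0, zero_smul]
    have hy0 : y = 0 := by rw [← hd, neg_eq_zero.1 hd0, zero_smul]
    have e1 : (⟨x, hx⟩ : pa.domain) = 0 := Subtype.ext hx0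
    have e2 : (⟨y, hy⟩ : pb.domain) = 0 := Subtype.ext hy0
    rw [e1, e2, pa.map_zero, pb.map_zero]
  set pab := pa.sup pb compat_ab with hpab
  have hdec : ∀ w ∈ pab.domain, ∃ c d : ℝ, c • a + d • b = w := by
    intro w hw
    obtain ⟨wa, hwa, wb, hwb, rfl⟩ := Submodule.mem_sup.1 hw
    obtain ⟨c, rfl⟩ := Submodule.mem_span_singleton.1 hwa
    obtain ⟨d, rfl⟩ := Submodule.mem_span_singleton.1 hwb
    exact ⟨c, d, rfl⟩
  have pab_val : ∀ (c d : ℝ) (w : X) (hm : w ∈ pab.domain), c • a + d • b = w →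
      pab ⟨w, hm⟩ = c * ((1-ε)*s) + d * ((1-ε)*t) := by
    rintro c d w hm rfl
    have hma : c • a ∈ pa.domain := Submodule.mem_span_singleton.2 ⟨c, rfl⟩
    have hmb : d • b ∈ pb.domain := Submodule.mem_span_singleton.2 ⟨d, rfl⟩
    have h1 : pab ⟨c • a + d • b, hm⟩ = pa ⟨c • a, hma⟩ + pb ⟨d • b, hmb⟩ :=
      LinearPMap.sup_apply compat_ab ⟨c • a, hma⟩ ⟨d • b, hmb⟩ ⟨c • a + d • b, hm⟩ rfl
    have h2 : pa ⟨c • a, hma⟩ = c • ((1-ε)*s) := LinearPMap.mkSpanSingleton'_apply _ _ _ c hma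
    have h3 : pb ⟨d • b, hmb⟩ = d • ((1-ε)*t) := LinearPMap.mkSpanSingleton'_apply _ _ _ d hmb
    rw [h1, h2, h3, smul_eq_mul, smul_eq_mul]
  have pE_val : ∀ (y : X) (hm : y ∈ pE.domain), pE ⟨y, hm⟩ = (1-ε) * f y := by
    intro y hm
    have h1 : pE ⟨y, hm⟩ = ((1-ε) • f.toLinearMap) y := LinearMap.toPMap_apply _ E ⟨y, hm⟩
    rw [h1]
    simp [smul_eq_mul]
  have compat_E : ∀ (x : pE.domain) (y : pab.domain), (x : X) = y → pE x = pab y := by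
    rintro ⟨x, hx⟩ ⟨w, hw⟩ (hxw : x = w)
    obtain ⟨c, d, hcd⟩ := hdec w hw
    have h0 : x + (-c) • a + (-d) • b = 0 := by
      rw [neg_smul, neg_smul, hxw, ← hcd]
      abel
    obtain ⟨hx0, hc0, hd0⟩ := hzero x hx (-c) (-d) h0
    have hw0 : w = 0 := by
      rw [← hcd, neg_eq_zero.1 hc0, neg_eq_zero.1 hd0, zero_smul, zero_smul, add_zero]
    have e1 : (⟨x, hx⟩ : pE.domain) = 0 := Subtype.ext hx0
    have e2 : (⟨w, hw⟩ : pab.domain) = 0 := Subtype.ext hw0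
    rw [e1, e2, pE.map_zero, pab.map_zero]
  set p := pE.sup pab compat_E with hp
  have hbound : ∀ v : p.domain, p v ≤ ‖(v : X)‖ := by
    rintro ⟨v, hv⟩
    obtain ⟨y, hy, w, hw, hyw⟩ := Submodule.mem_sup.1 hv
    obtain ⟨c, d, hcd⟩ := hdec w hw
    have h1 : p ⟨v, hv⟩ = pE ⟨y, hy⟩ + pab ⟨w, hw⟩ :=
      LinearPMap.sup_apply compat_E ⟨y, hy⟩ ⟨w, hw⟩ ⟨v, hv⟩ hyw
    have h2 : pab ⟨w, hw⟩ = c * ((1-ε)*s) + d * ((1-ε)*t) := pab_val c d w hw hcd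
    have hEy : y ∈ E := hy
    rw [h1, h2, pE_val y hy]
    have hfy : f y ≤ ‖y‖ := by
      have : |f y| ≤ ‖y‖ := by
        calc |f y| = ‖f y‖ := rfl
          _ ≤ ‖f‖ * ‖y‖ := f.le_opNorm y
          _ ≤ 1 * ‖y‖ := by gcongr
          _ = ‖y‖ := one_mul _
      exact (abs_le.1 this).2
    have hcs : c * s ≤ |c| := by
      calc c * s ≤ |c * s| := le_abs_self _
        _ = |c| * |s| := abs_mul c s
        _ ≤ |c| * 1 := by gcongr
        _ = |c| := mul_one _
    have hdt : d * t ≤ |d| := by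
      calc d * t ≤ |d * t| := le_abs_self _
        _ = |d| * |t| := abs_mul d t
        _ ≤ |d| * 1 := by gcongr
        _ = |d| := mul_one _
    have hP := P y hEy c d
    have hveq : (⟨v, hv⟩ : p.domain).val = y + c • a + d • b := by
      simp only [← hyw, ← hcd]
      abel
    rw [hveq]
    have e1 : (1-ε) * f y ≤ (1-ε) * ‖y‖ := mul_le_mul_of_nonneg_left hfy h1ε.le
    have e2 : c * ((1-ε)*s) ≤ (1-ε) * |c| := by
      have := mul_le_mul_of_nonneg_left hcs h1ε.le
      nlinarith
    have e3 : d * ((1-ε)*t) ≤ (1-ε) * |d| := by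
      have := mul_le_mul_of_nonneg_left hdt h1ε.le
      nlinarith
    nlinarith
  obtain ⟨g, hg_eq, hg_le⟩ := exists_extension_of_le_sublinear p (fun x => ‖x‖)
    (fun c hc x => by simp [norm_smul, abs_of_pos hc])
    (fun x y => norm_add_le x y) hbound
  have hgabs : ∀ x, |g x| ≤ ‖x‖ := by
    intro x
    refine abs_le.2 ⟨?_, hg_le x⟩
    have := hg_le (-x)
    rw [map_neg, norm_neg] at this
    linarith
  refine ⟨g.mkContinuous 1 (fun x => by simpa using hgabs x), ?_, ?_, ?_, ?_⟩
  · exact g.mkContinuous_norm_le zero_le_one _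
  · intro y hy
    have hyd : y ∈ p.domain := Submodule.mem_sup_left hy
    have h1 : g y = p ⟨y, hyd⟩ := hg_eq ⟨y, hyd⟩
    have h2 : p ⟨y, hyd⟩ = pE ⟨y, hy⟩ + pab 0 :=
      LinearPMap.sup_apply compat_E ⟨y, hy⟩ 0 ⟨y, hyd⟩ (by simp)
    show g y = (1-ε) * f y
    rw [h1, h2, pab.map_zero, add_zero, pE_val y hy]
  · have had' : a ∈ pab.domain := Submodule.mem_sup_left (Submodule.mem_span_singleton_self a)
    have had : a ∈ p.domain := Submodule.mem_sup_right had'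
    have h1 : g a = p ⟨a, had⟩ := hg_eq ⟨a, had⟩
    have h2 : p ⟨a, had⟩ = pE 0 + pab ⟨a, had'⟩ :=
      LinearPMap.sup_apply compat_E 0 ⟨a, had'⟩ ⟨a, had⟩ (by simp)
    have h3 : pab ⟨a, had'⟩ = 1 * ((1-ε)*s) + 0 * ((1-ε)*t) :=
      pab_val 1 0 a had' (by rw [one_smul, zero_smul, add_zero])
    show g a = (1-ε) * s
    rw [h1, h2, pE.map_zero, zero_add, h3]
    ring
  · have hbd' : b ∈ pab.domain := Submodule.mem_sup_right (Submodule.mem_span_singleton_self b)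
    have hbd : b ∈ p.domain := Submodule.mem_sup_right hbd'
    have h1 : g b = p ⟨b, hbd⟩ := hg_eq ⟨b, hbd⟩
    have h2 : p ⟨b, hbd⟩ = pE 0 + pab ⟨b, hbd'⟩ :=
      LinearPMap.sup_apply compat_E 0 ⟨b, hbd'⟩ ⟨b, hbd⟩ (by simp)
    have h3 : pab ⟨b, hbd'⟩ = 0 * ((1-ε)*s) + 1 * ((1-ε)*t) :=
      pab_val 0 1 b hbd' (by rw [one_smul, zero_smul, zero_add])
    show g b = (1-ε) * t
    rw [h1, h2, pE.map_zero, zero_add, h3]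
    ring

lemma aux_w {Z : Type*} [NormedAddCommGroup Z] [NormedSpace ℝ Z] {N : ℕ} (hN : 1 ≤ N)
    {δ : X → Z} (hδ : IsInjSymTensorProduct X N Z δ)
    {E : Submodule ℝ X} {a b : X} {ε : ℝ} (hε0 : 0 ≤ ε) (hε1 : ε < 1)
    (ha1 : ‖a‖ = 1) (hb1 : ‖b‖ = 1)
    (P : ∀ y ∈ E, ∀ l m : ℝ, (1 - ε) * (‖y‖ + |l| + |m|) ≤ ‖y + l • a + m • b‖) :
    ∃ lw : List (ℝ × X), ‖(lw.map fun p => p.1 • δ p.2).sum‖ = 1 ∧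
      ∀ f : X →L[ℝ] ℝ, ‖f‖ ≤ 1 → ∀ σ : ℝ, σ = 1 ∨ σ = -1 →
        ∃ h : X →L[ℝ] ℝ, ‖h‖ ≤ 1 ∧ (∀ y ∈ E, h y = (1 - ε) * f y) ∧
          (1 - ε)^N ≤ σ * (lw.map fun p => p.1 * (h p.2) ^ N).sum := by
  have hN0 : N ≠ 0 := by omega
  have ha0 : a ≠ 0 := by intro h; rw [h, norm_zero] at ha1; norm_num at ha1
  have hb0 : b ≠ 0 := by intro h; rw [h, norm_zero] at hb1; norm_num at hb1
  have h1ε : (0:ℝ) < 1 - ε := by linarith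
  have habs : ∀ (f : X →L[ℝ] ℝ), ‖f‖ ≤ 1 → ∀ x : X, ‖x‖ = 1 → |f x| ≤ 1 := by
    intro f hf x hx
    calc |f x| = ‖f x‖ := rfl
      _ ≤ ‖f‖ * ‖x‖ := f.le_opNorm x
      _ ≤ 1 := by rw [hx, mul_one]; exact hf
  rcases Nat.even_or_odd N with hNe | hNo
  · -- N even
    set l0 : List (ℝ × X) := [(1, a), (-1, b)] with hl0
    have hval : ∀ g : X →L[ℝ] ℝ,
        (l0.map fun p => p.1 * (g p.2) ^ N).sum = (g a) ^ N - (g b) ^ N := by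
      intro g; simp [hl0]; ring
    set c := ‖(l0.map fun p => p.1 • δ p.2).sum‖ with hc
    have hbd : ∀ (g : X →L[ℝ] ℝ), ‖g‖ ≤ 1 → ∀ x : X, ‖x‖ = 1 →
        0 ≤ (g x)^N ∧ (g x)^N ≤ 1 := by
      intro g hg x hx
      refine ⟨hNe.pow_nonneg _, ?_⟩
      calc (g x)^N = |g x|^N := (hNe.pow_abs _).symm
        _ ≤ 1 := pow_le_one₀ (abs_nonneg _) (habs g hg x hx)
    have hc_le : c ≤ 1 := by
      refine aux_norm_le hδ l0 1 zero_le_one ?_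
      intro g hg
      rw [hval g]
      obtain ⟨h1, h2⟩ := hbd g hg a ha1
      obtain ⟨h3, h4⟩ := hbd g hg b hb1
      rw [abs_le]
      constructor <;> linarith
    obtain ⟨h0, hh0n, hh0E, hh0a, hh0b⟩ :=
      aux_functional hε0 hε1 ha0 hb0 P 0 (by simp) 1 0 (by norm_num) (by norm_num)
    have hc_ge : (1-ε)^N ≤ c := by
      have h5 := aux_value_le_norm hδ l0 h0 hh0n
      rw [hval h0, hh0a, hh0b, mul_one, mul_zero, zero_pow hN0, sub_zero,
        abs_of_pos (pow_pos h1ε N)] at h5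
      exact h5
    have hcpos : 0 < c := lt_of_lt_of_le (pow_pos h1ε N) hc_ge
    have hcinv : 1 ≤ c⁻¹ := by
      rw [le_inv_comm₀ one_pos hcpos, inv_one]; exact hc_le
    refine ⟨[(c⁻¹, a), (-c⁻¹, b)], ?_, ?_⟩
    · have hsum : (([(c⁻¹, a), (-c⁻¹, b)] : List (ℝ × X)).map fun p => p.1 • δ p.2).sum
          = c⁻¹ • ((l0.map fun p => p.1 • δ p.2).sum) := by
        simp [hl0, smul_add, smul_smul]
      rw [hsum, norm_smul, Real.norm_eq_abs, abs_of_pos (inv_pos.2 hcpos), ← hc,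
        inv_mul_cancel₀ hcpos.ne']
    · intro f hf σ hσ
      have hpow : (0:ℝ) < (1-ε)^N := pow_pos h1ε N
      have hgoal : (1-ε)^N ≤ c⁻¹ * (1-ε)^N := by nlinarith
      rcases hσ with rfl | rfl
      · obtain ⟨h, hhn, hhE, hha, hhb⟩ :=
          aux_functional hε0 hε1 ha0 hb0 P f hf 1 0 (by norm_num) (by norm_num)
        refine ⟨h, hhn, hhE, ?_⟩
        have hv : (([(c⁻¹, a), (-c⁻¹, b)] : List (ℝ × X)).map
            fun p => p.1 * (h p.2) ^ N).sum = c⁻¹ * (1-ε)^N := by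
          simp [hha, hhb, mul_one, mul_zero, zero_pow hN0]
        rw [hv, one_mul]
        exact hgoal
      · obtain ⟨h, hhn, hhE, hha, hhb⟩ :=
          aux_functional hε0 hε1 ha0 hb0 P f hf 0 1 (by norm_num) (by norm_num)
        refine ⟨h, hhn, hhE, ?_⟩
        have hv : (([(c⁻¹, a), (-c⁻¹, b)] : List (ℝ × X)).map
            fun p => p.1 * (h p.2) ^ N).sum = -(c⁻¹ * (1-ε)^N) := by
          simp [hha, hhb, mul_one, mul_zero, zero_pow hN0]
        rw [hv]
        rw [neg_one_mul, neg_neg]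
        exact hgoal
  · -- N odd
    refine ⟨[(1, a)], ?_, ?_⟩
    · apply le_antisymm
      · refine aux_norm_le hδ [(1, a)] 1 zero_le_one ?_
        intro g hg
        simp only [List.map_cons, List.map_nil, List.sum_cons, List.sum_nil, add_zero, one_mul]
        calc |(g a) ^ N| = |g a| ^ N := abs_pow _ _
          _ ≤ 1 := pow_le_one₀ (abs_nonneg _) (habs g hg a ha1)
      · obtain ⟨g, hg1, hga⟩ := exists_dual_vector ℝ a (norm_ne_zero_iff.2 ha0)
        have hga' : g a = 1 := by rw [ha1] at hga; exact_mod_cast hga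
        have h5 := aux_value_le_norm hδ [(1, a)] g (le_of_eq hg1)
        simpa [hga'] using h5
    · intro f hf σ hσ
      obtain ⟨h, hhn, hhE, hha, -⟩ :=
        aux_functional hε0 hε1 ha0 hb0 P f hf σ 0
          (by rcases hσ with rfl | rfl <;> norm_num) (by norm_num)
      refine ⟨h, hhn, hhE, ?_⟩
      have hv : (([(1, a)] : List (ℝ × X)).map fun p => p.1 * (h p.2) ^ N).sum
          = ((1-ε) * σ)^N := by simp [hha]
      rw [hv]
      rcases hσ with rfl | rfl
      · rw [mul_one, one_mul]
      · rw [mul_neg_one, hNo.neg_pow, mul_neg, neg_one_mul, neg_neg]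

end AuxOH

theorem statement10 (X : Type*) [NormedAddCommGroup X] [NormedSpace ℝ X] [CompleteSpace X]
    (hX : IsOctahedral X) (N : ℕ) (hN : 1 ≤ N)
    (Z : Type*) [NormedAddCommGroup Z] [NormedSpace ℝ Z] [CompleteSpace Z]
    (δ : X → Z) (hδ : IsInjSymTensorProduct X N Z δ) :
    IsOctahedral Z := by
  intro n z hz ε hε
  have hN0 : N ≠ 0 := by omega
  have hN1 : (1:ℝ) ≤ (N:ℝ) := by exact_mod_cast hN
  set e := min ε (1/2) with he
  have he0 : 0 < e := lt_min hε (by norm_num)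
  have he2 : e ≤ 1/2 := min_le_right _ _
  have heε : e ≤ ε := min_le_left _ _
  set η := e/8 with hη
  have hη0 : 0 < η := by positivity
  -- density of the span of elementary tensors
  have hdense : ∀ v : Z, ∃ l : List (ℝ × X),
      ‖v - (l.map fun p => p.1 • δ p.2).sum‖ < η := by
    intro v
    have hcl : v ∈ closure ((Submodule.span ℝ (Set.range δ) : Submodule ℝ Z) : Set Z) := by
      rw [← Submodule.topologicalClosure_coe, hδ.1]
      trivial
    obtain ⟨u, hu, hud⟩ := Metric.mem_closure_iff.1 hcl η hη0
    obtain ⟨cf, hcf⟩ := Finsupp.mem_span_range_iff_exists_finsupp.1 hu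
    refine ⟨cf.support.toList.map fun x => (cf x, x), ?_⟩
    have hsum : ((cf.support.toList.map fun x => (cf x, x)).map
        fun p => p.1 • δ p.2).sum = u := by
      rw [List.map_map]
      have h1 : ((fun p : ℝ × X => p.1 • δ p.2) ∘ fun x => (cf x, x))
          = fun x => cf x • δ x := rfl
      rw [h1, Finset.sum_map_toList]
      exact hcf
    rw [hsum, ← dist_eq_norm]
    exact hud
  choose l hl using fun i => hdense (z i)
  set u : Fin n → Z := fun i => ((l i).map fun p => p.1 • δ p.2).sum with hu
  have hun : ∀ i, 1 - η ≤ ‖u i‖ := by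
    intro i
    have h1 := norm_sub_norm_le (z i) (u i)
    rw [hz i] at h1
    linarith [hl i]
  set S : Set X := ⋃ i : Fin n, {x | x ∈ (l i).map Prod.snd} with hS
  have hSfin : S.Finite := Set.finite_iUnion fun i => ((l i).map Prod.snd).finite_toSet
  have hmemE : ∀ i, ∀ p ∈ l i, (p : ℝ × X).2 ∈ Submodule.span ℝ S := by
    intro i p hp
    apply Submodule.subset_span
    exact Set.mem_iUnion.2 ⟨i, List.mem_map_of_mem hp⟩
  set ε' := e/(8*N) with hε'
  have hNpos : (0:ℝ) < (N:ℝ) := by linarith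
  have hε'0 : 0 < ε' := by positivity
  have hε'le : ε' ≤ e/8 := by
    rw [hε', div_le_div_iff₀ (by positivity) (by norm_num)]
    nlinarith
  have hε'2 : ε' ≤ 1/2 := by linarith
  obtain ⟨a, b, ha1, hb1, P⟩ := aux_strongOH2 hX hSfin hε'0 hε'2
  obtain ⟨lw, hlw1, hC⟩ := aux_w hN hδ hε'0.le (by linarith) ha1 hb1 P
  set w := (lw.map fun p => p.1 • δ p.2).sum with hw
  refine ⟨w, hlw1, ?_⟩
  intro i
  have hSne : (0:ℝ) ∈ {s : ℝ | ∃ f : X →L[ℝ] ℝ, ‖f‖ ≤ 1 ∧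
      s = |((l i).map fun p => p.1 * (f p.2) ^ N).sum|} := by
    refine ⟨0, by simp, ?_⟩
    simp [zero_pow hN0]
  have hlt : ‖u i‖ - η < sSup {s : ℝ | ∃ f : X →L[ℝ] ℝ, ‖f‖ ≤ 1 ∧
      s = |((l i).map fun p => p.1 * (f p.2) ^ N).sum|} := by
    rw [← hδ.2 (l i)]
    have : ‖u i‖ = ‖((l i).map fun p => p.1 • δ p.2).sum‖ := rfl
    linarith [hη0]
  obtain ⟨v, ⟨f, hf, hveq⟩, hvgt⟩ := exists_lt_of_lt_csSup ⟨0, hSne⟩ hlt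
  rw [hveq] at hvgt
  set V := ((l i).map fun p => p.1 * (f p.2) ^ N).sum with hV
  set σ : ℝ := if 0 ≤ V then 1 else -1 with hσ
  have hσ1 : σ = 1 ∨ σ = -1 := by rw [hσ]; split_ifs <;> simp
  have hσV : σ * V = |V| := by
    rw [hσ]
    split_ifs with h
    · rw [one_mul, abs_of_nonneg h]
    · rw [neg_one_mul, abs_of_neg (not_le.1 h)]
  obtain ⟨h, hhn, hhE, hhval⟩ := hC f hf σ hσ1
  have hval_li : ((l i).map fun p => p.1 * (h p.2) ^ N).sum = (1-ε')^N * V := by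
    have hmapeq : ((l i).map fun p => p.1 * (h p.2) ^ N)
        = ((l i).map fun p => (1-ε')^N * (p.1 * (f p.2) ^ N)) := by
      apply List.map_congr_left
      intro p hp
      rw [hhE p.2 (hmemE i p hp), mul_pow]
      ring
    rw [hmapeq, List.sum_map_mul_left]
  have hcomb := aux_value_le_norm hδ ((l i) ++ lw) h hhn
  rw [List.map_append, List.sum_append, List.map_append, List.sum_append] at hcomb
  rw [hval_li] at hcomb
  set W := (lw.map fun p => p.1 * (h p.2) ^ N).sum with hW
  have hσW : (1-ε')^N ≤ σ * W := hhval
  have hQ1 : (1-ε')^N ≤ 1 := pow_le_one₀ (by linarith) (by linarith)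
  have hQ0 : (0:ℝ) < (1-ε')^N := pow_pos (by linarith) N
  have hbern : 1 - e/8 ≤ (1-ε')^N := by
    have h1 := one_add_mul_le_pow (a := -ε') (by linarith) N
    have hNne : (N:ℝ) ≠ 0 := by positivity
    have h2 : (1:ℝ) + (N:ℝ) * -ε' = 1 - e/8 := by
      rw [hε']
      field_simp
      ring
    have h3 : (1:ℝ) + -ε' = 1 - ε' := by ring
    rw [h2, h3] at h1
    exact h1
  have hσsum : σ * ((1-ε')^N * V + W) ≤ |(1-ε')^N * V + W| := by
    rcases hσ1 with h1 | h1 <;> rw [h1]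
    · rw [one_mul]; exact le_abs_self _
    · rw [neg_one_mul]; exact neg_le_abs _
  have hfin1 : (1-ε')^N * |V| + (1-ε')^N ≤ σ * ((1-ε')^N * V + W) := by
    have h1 : σ * ((1-ε')^N * V + W) = (1-ε')^N * (σ * V) + σ * W := by ring
    rw [h1, hσV]
    linarith
  have hV2 : 1 - 2*η < |V| := by
    have := hun i
    linarith
  have huw : (1-ε')^N * (2 - 2*η) < ‖u i + w‖ := by
    have h1 : (1-ε')^N * (2 - 2*η) < (1-ε')^N * |V| + (1-ε')^N := by nlinarith
    linarith [hσsum, hfin1, hcomb]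
  have h6 : ‖u i + w‖ - ‖z i + w‖ ≤ ‖z i - u i‖ := by
    have h7 := norm_sub_norm_le (u i + w) (z i + w)
    have h8 : u i + w - (z i + w) = -(z i - u i) := by abel
    rw [h8, norm_neg] at h7
    exact h7
  have hfinal : 2 - ε < ‖z i + w‖ := by
    have h9 := hl i
    have hA : (0:ℝ) ≤ 2 - 2*η := by rw [hη]; linarith
    have hB : (1 - e/8) * (2 - 2*η) ≤ (1-ε')^N * (2 - 2*η) :=
      mul_le_mul_of_nonneg_right hbern hA
    have hC2 : (1 - e/8) * (2 - 2*η) = 2 - 2*η - e/4 + e*η/4 := by rw [hη]; ring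
    have hD : (0:ℝ) ≤ e*η := by positivity
    have hE : η = e/8 := hη
    linarith [hB, huw, h6, h9]
  exact hfinal
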